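/- Pre-contingency representation of the post-contingency PTDF matrix: if the matrix I − B_F C_F^T A C_F is invertible and K^F := B_{−F} C_{−F}^T A C_F (I − B_F C_F^T A C_F)^{−1}, then the post-contingency PTDF matrix D̂^F := B_{−F} C_{−F}^T A_{−F} satisfies D̂^F = (B_{−F} C_{−F}^T + K^F B_F C_F^T) A. -/

import Mathlib

open Matrix MeasureTheory

variable {n m : ℕ}

/-- Incidence matrix of an oriented network with buses `Fin (n+1)` (bus `Fin.last n` is the
reference bus) and oriented lines indexed by `Fin m` with endpoint maps `src`, `tgt`. -/
def incM (src tgt : Fin m → Fin (n+1)) : Matrix (Fin (n+1)) (Fin m) ℝ :=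
  Matrix.of fun i l => if src l = i then 1 else if tgt l = i then -1 else 0

/-- The matrix `A` built from a Laplacian `L`: its top-left `n × n` block is the inverse of the
reduced Laplacian (obtained by deleting the last row and column) and all other entries are `0`. -/
noncomputable def AmatL (L : Matrix (Fin (n+1)) (Fin (n+1)) ℝ) : Matrix (Fin (n+1)) (Fin (n+1)) ℝ :=
  Matrix.of fun i j =>
    if h : i ≠ Fin.last n ∧ j ≠ Fin.last n then
      (L.submatrix Fin.castSucc Fin.castSucc)⁻¹ (i.castPred h.1) (j.castPred h.2)
    else 0

/-- The matrix `A` of the network with susceptance vector `b`. -/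
noncomputable def Amat (src tgt : Fin m → Fin (n+1)) (b : Fin m → ℝ) : Matrix (Fin (n+1)) (Fin (n+1)) ℝ :=
  AmatL (incM src tgt * Matrix.diagonal b * (incM src tgt)ᵀ)

/-- Power transfer distribution factor `D_{l, k ĵ}`. -/
noncomputable def ptdf (src tgt : Fin m → Fin (n+1)) (b : Fin m → ℝ) (l : Fin m) (k jh : Fin (n+1)) : ℝ :=
  b l * (Amat src tgt b (src l) k + Amat src tgt b (tgt l) jh
       - Amat src tgt b (src l) jh - Amat src tgt b (tgt l) k)

/-- The underlying simple graph of the network. -/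
def netGraph (src tgt : Fin m → Fin (n+1)) : SimpleGraph (Fin (n+1)) :=
  SimpleGraph.fromRel fun a c => ∃ l, src l = a ∧ tgt l = c

/-- There is a simple path in the network from `jh` to `k` that contains line `l`. -/
def PathThrough (src tgt : Fin m → Fin (n+1)) (jh k : Fin (n+1)) (l : Fin m) : Prop :=
  ∃ w : (netGraph src tgt).Walk jh k, w.IsPath ∧ s(src l, tgt l) ∈ w.edges

/-- Lines `e₁` and `e₂` belong to the same block: they are equal or lie on a common simple cycle. -/
def sameBlock (src tgt : Fin m → Fin (n+1)) (e₁ e₂ : Fin m) : Prop :=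
  e₁ = e₂ ∨ ∃ (v : Fin (n+1)) (c : (netGraph src tgt).Walk v v),
    c.IsCycle ∧ s(src e₁, tgt e₁) ∈ c.edges ∧ s(src e₂, tgt e₂) ∈ c.edges

/-- A cut vertex: a vertex whose removal disconnects the graph. -/
def IsCutVertex {V : Type*} (G : SimpleGraph V) (v : V) : Prop :=
  ¬ (G.induce {w : V | w ≠ v}).Connected

/-- The subgraph of the network with only the lines in `S`. -/
def netGraphOn (src tgt : Fin m → Fin (n+1)) (S : Set (Fin m)) : SimpleGraph (Fin (n+1)) :=
  SimpleGraph.fromRel fun a c => ∃ l ∈ S, src l = a ∧ tgt l = c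

def maskIn (F : Finset (Fin m)) (b : Fin m → ℝ) : Fin m → ℝ := fun l => if l ∈ F then b l else 0
def maskOut (F : Finset (Fin m)) (b : Fin m → ℝ) : Fin m → ℝ := fun l => if l ∈ F then 0 else b l

/-- Column submatrix `C_F` (columns outside `F` zeroed out). -/
def CFmat (src tgt : Fin m → Fin (n+1)) (F : Finset (Fin m)) : Matrix (Fin (n+1)) (Fin m) ℝ :=
  Matrix.of fun i l => if l ∈ F then incM src tgt i l else 0

/-- Column submatrix `C_{−F}` (columns in `F` zeroed out). -/
def CmFmat (src tgt : Fin m → Fin (n+1)) (F : Finset (Fin m)) : Matrix (Fin (n+1)) (Fin m) ℝ :=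
  Matrix.of fun i l => if l ∈ F then 0 else incM src tgt i l

/-- Diagonal susceptance matrix `B_F`. -/
def BFmat (b : Fin m → ℝ) (F : Finset (Fin m)) : Matrix (Fin m) (Fin m) ℝ :=
  Matrix.diagonal (maskIn F b)

/-- Diagonal susceptance matrix `B_{−F}`. -/
def BmFmat (b : Fin m → ℝ) (F : Finset (Fin m)) : Matrix (Fin m) (Fin m) ℝ :=
  Matrix.diagonal (maskOut F b)

/-- The matrix `A_{−F}` of the post-contingency network `(N, E ∖ F)`. -/
noncomputable def AmFmat (src tgt : Fin m → Fin (n+1)) (b : Fin m → ℝ) (F : Finset (Fin m)) :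
    Matrix (Fin (n+1)) (Fin (n+1)) ℝ :=
  AmatL (CmFmat src tgt F * BmFmat b F * (CmFmat src tgt F)ᵀ)

/-- The `k`-th standard unit vector of `ℝ^{n+1}`. -/
def evec (k : Fin (n+1)) : Fin (n+1) → ℝ := Pi.single k 1


/-! ### Auxiliary machinery -/

/-- Embedding matrix `J` whose columns are the first `n` standard basis vectors. -/
def Jmat (n : ℕ) : Matrix (Fin (n+1)) (Fin n) ℝ :=
  Matrix.of fun i j => if i = j.castSucc then 1 else 0

lemma mul_Jmat {α : Type*} [Fintype α] (M : Matrix α (Fin (n+1)) ℝ) :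
    M * Jmat n = M.submatrix id Fin.castSucc := by
  ext x j
  simp [Jmat, Matrix.mul_apply, Matrix.of_apply, mul_ite]

lemma Jmat_transpose_mul {α : Type*} [Fintype α] (M : Matrix (Fin (n+1)) α ℝ) :
    (Jmat n)ᵀ * M = M.submatrix Fin.castSucc id := by
  ext a x
  simp [Jmat, Matrix.mul_apply, Matrix.of_apply, ite_mul, Matrix.transpose_apply]

lemma Jmat_conj (X : Matrix (Fin (n+1)) (Fin (n+1)) ℝ) :
    (Jmat n)ᵀ * X * (Jmat n) = X.submatrix Fin.castSucc Fin.castSucc := by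
  rw [Jmat_transpose_mul, mul_Jmat, Matrix.submatrix_submatrix]
  rfl

lemma Jmat_last (a : Fin n) : Jmat n (Fin.last n) a = 0 := by
  simp [Jmat, (Fin.castSucc_lt_last a).ne']

lemma Jmat_ne_last {i : Fin (n+1)} (hi : i ≠ Fin.last n) (a : Fin n) :
    Jmat n i a = if a = i.castPred hi then 1 else 0 := by
  simp only [Jmat, Matrix.of_apply]
  congr 1
  rw [eq_iff_iff]
  constructor
  · intro h; subst h; simp
  · rintro rfl; simp

lemma AmatL_eq (L : Matrix (Fin (n+1)) (Fin (n+1)) ℝ) :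
    AmatL L = Jmat n * (L.submatrix Fin.castSucc Fin.castSucc)⁻¹ * (Jmat n)ᵀ := by
  ext i j
  by_cases hi : i = Fin.last n
  · subst hi
    simp [AmatL, Matrix.mul_apply, Jmat_last]
  · by_cases hj : j = Fin.last n
    · subst hj
      simp [AmatL, Matrix.mul_apply, Jmat_last]
    · simp [AmatL, hi, hj, Matrix.mul_apply, Jmat_ne_last hi, Jmat_ne_last hj, ite_mul, mul_ite,
        Finset.sum_ite_eq', Finset.sum_ite_eq]

lemma incM_transpose_mulVec (src tgt : Fin m → Fin (n+1)) (hsl : ∀ l, src l ≠ tgt l)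
    (x : Fin (n+1) → ℝ) (l : Fin m) :
    ((incM src tgt)ᵀ *ᵥ x) l = x (src l) - x (tgt l) := by
  have : ∀ i : Fin (n+1), (incM src tgt)ᵀ l i * x i
      = (if i = src l then x i else 0) + (if i = tgt l then -(x i) else 0) := by
    intro i
    simp only [Matrix.transpose_apply, incM, Matrix.of_apply]
    by_cases h1 : src l = i
    · subst h1; simp [hsl l, (hsl l).symm]
    · by_cases h2 : tgt l = i
      · subst h2; simp [h1, Ne.symm h1, eq_comm]
      · simp [h1, h2, Ne.symm h1, Ne.symm h2]
  simp only [Matrix.mulVec, dotProduct, this, Finset.sum_add_distrib,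
    Finset.sum_ite_eq', Finset.mem_univ, if_true]
  ring

lemma reducedL_isUnit (src tgt : Fin m → Fin (n+1)) (hsl : ∀ l, src l ≠ tgt l)
    (w : Fin m → ℝ) (hw : ∀ l, 0 ≤ w l)
    (hc : ∀ x : Fin (n+1) → ℝ, (∀ l, w l ≠ 0 → x (src l) = x (tgt l)) →
      ∀ i, x i = x (Fin.last n)) :
    IsUnit ((incM src tgt * Matrix.diagonal w * (incM src tgt)ᵀ).submatrix
      Fin.castSucc Fin.castSucc).det := by
  set C := incM src tgt with hC
  set Lb := (C * Matrix.diagonal w * Cᵀ).submatrix Fin.castSucc Fin.castSucc with hLb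
  rw [isUnit_iff_ne_zero]
  intro hdet
  obtain ⟨v, hv0, hvm⟩ := Matrix.exists_mulVec_eq_zero_iff.mpr hdet
  set x : Fin (n+1) → ℝ := fun i => if h : i = Fin.last n then 0 else v (i.castPred h) with hx
  have hxlast : x (Fin.last n) = 0 := by simp [hx]
  have hxcs : ∀ a : Fin n, x a.castSucc = v a := by
    intro a
    simp [hx, (Fin.castSucc_lt_last a).ne]
  have hrow : ∀ a : Fin n, ((C * Matrix.diagonal w * Cᵀ) *ᵥ x) a.castSucc = 0 := by
    intro a
    have := congrFun hvm a
    simp only [Matrix.mulVec, dotProduct, hLb, Matrix.submatrix_apply,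
      Pi.zero_apply] at this ⊢
    rw [Fin.sum_univ_castSucc]
    simp only [hxlast, mul_zero, add_zero]
    rw [← this]
    exact Finset.sum_congr rfl fun b _ => by rw [hxcs]
  have hquad : x ⬝ᵥ ((C * Matrix.diagonal w * Cᵀ) *ᵥ x) = 0 := by
    simp only [dotProduct]
    rw [Fin.sum_univ_castSucc]
    simp [hxlast, hrow]
  set y : Fin m → ℝ := Cᵀ *ᵥ x with hy
  have hquad2 : x ⬝ᵥ ((C * Matrix.diagonal w * Cᵀ) *ᵥ x) = ∑ l, w l * y l ^ 2 := by
    rw [← Matrix.mulVec_mulVec, ← Matrix.mulVec_mulVec, Matrix.dotProduct_mulVec,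
      ← Matrix.mulVec_transpose]
    simp only [← hy, dotProduct]
    refine Finset.sum_congr rfl fun l _ => ?_
    simp [Matrix.mulVec_diagonal]
    ring
  rw [hquad2] at hquad
  have hzero : ∀ l ∈ Finset.univ, w l * y l ^ 2 = 0 :=
    (Finset.sum_eq_zero_iff_of_nonneg fun l _ => mul_nonneg (hw l) (sq_nonneg _)).mp hquad
  have hconst : ∀ l, w l ≠ 0 → x (src l) = x (tgt l) := by
    intro l hwl
    have h0 := hzero l (Finset.mem_univ l)
    have hy0 : y l = 0 := by
      rcases mul_eq_zero.mp h0 with h | h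
      · exact absurd h hwl
      · exact pow_eq_zero_iff (two_ne_zero) |>.mp h
    have := incM_transpose_mulVec src tgt hsl x l
    rw [← hC, ← hy, hy0] at this
    linarith [this]
  have hall := hc x hconst
  apply hv0
  funext a
  have := hall a.castSucc
  rw [hxcs, hxlast] at this
  exact this

lemma walk_const {V : Type*} {G : SimpleGraph V} (x : V → ℝ)
    (h : ∀ a c, G.Adj a c → x a = x c) {u v : V} (w : G.Walk u v) : x u = x v := by
  induction w with
  | nil => rfl
  | cons h' p ih => exact (h _ _ h').trans ih

lemma conn_const {V : Type*} {G : SimpleGraph V} (hG : G.Connected) (x : V → ℝ)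
    (h : ∀ a c, G.Adj a c → x a = x c) (i j : V) : x i = x j :=
  walk_const x h ((hG i j).some)

lemma hc_pre (src tgt : Fin m → Fin (n+1)) (b : Fin m → ℝ) (hb : ∀ l, 0 < b l)
    (hconn : (netGraph src tgt).Connected)
    (x : Fin (n+1) → ℝ) (hx : ∀ l, b l ≠ 0 → x (src l) = x (tgt l)) (i : Fin (n+1)) :
    x i = x (Fin.last n) := by
  refine conn_const hconn x (fun a c hac => ?_) i _
  rw [netGraph, SimpleGraph.fromRel_adj] at hac
  obtain ⟨-, ⟨l, rfl, rfl⟩ | ⟨l, rfl, rfl⟩⟩ := hac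
  · exact hx l (hb l).ne'
  · exact (hx l (hb l).ne').symm

lemma hc_post (src tgt : Fin m → Fin (n+1)) (b : Fin m → ℝ) (hb : ∀ l, 0 < b l)
    (F : Finset (Fin m)) (hconn : (netGraphOn src tgt {l | l ∉ F}).Connected)
    (x : Fin (n+1) → ℝ) (hx : ∀ l, maskOut F b l ≠ 0 → x (src l) = x (tgt l)) (i : Fin (n+1)) :
    x i = x (Fin.last n) := by
  refine conn_const hconn x (fun a c hac => ?_) i _
  rw [netGraphOn, SimpleGraph.fromRel_adj] at hac
  have key : ∀ l, l ∉ F → x (src l) = x (tgt l) := by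
    intro l hl
    refine hx l ?_
    simp [maskOut, hl, (hb l).ne']
  obtain ⟨-, ⟨l, hl, rfl, rfl⟩ | ⟨l, hl, rfl, rfl⟩⟩ := hac
  · exact key l hl
  · exact (key l hl).symm

lemma CF_mul_BF (src tgt : Fin m → Fin (n+1)) (b : Fin m → ℝ) (F : Finset (Fin m)) :
    CFmat src tgt F * BFmat b F = incM src tgt * BFmat b F := by
  ext i l
  simp only [BFmat, Matrix.mul_diagonal, CFmat, Matrix.of_apply, maskIn]
  by_cases h : l ∈ F <;> simp [h]

lemma CmF_mul_BmF (src tgt : Fin m → Fin (n+1)) (b : Fin m → ℝ) (F : Finset (Fin m)) :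
    CmFmat src tgt F * BmFmat b F = incM src tgt * BmFmat b F := by
  ext i l
  simp only [BmFmat, Matrix.mul_diagonal, CmFmat, Matrix.of_apply, maskOut]
  by_cases h : l ∈ F <;> simp [h]

lemma BF_mul_CFt (src tgt : Fin m → Fin (n+1)) (b : Fin m → ℝ) (F : Finset (Fin m)) :
    BFmat b F * (CFmat src tgt F)ᵀ = BFmat b F * (incM src tgt)ᵀ := by
  ext l i
  simp only [BFmat, Matrix.diagonal_mul, CFmat, Matrix.transpose_apply, Matrix.of_apply, maskIn]
  by_cases h : l ∈ F <;> simp [h]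

lemma BmF_mul_CmFt (src tgt : Fin m → Fin (n+1)) (b : Fin m → ℝ) (F : Finset (Fin m)) :
    BmFmat b F * (CmFmat src tgt F)ᵀ = BmFmat b F * (incM src tgt)ᵀ := by
  ext l i
  simp only [BmFmat, Matrix.diagonal_mul, CmFmat, Matrix.transpose_apply, Matrix.of_apply, maskOut]
  by_cases h : l ∈ F <;> simp [h]

lemma Lm_eq (src tgt : Fin m → Fin (n+1)) (b : Fin m → ℝ) (F : Finset (Fin m)) :
    CmFmat src tgt F * BmFmat b F * (CmFmat src tgt F)ᵀ
      = incM src tgt * Matrix.diagonal (maskOut F b) * (incM src tgt)ᵀ := by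
  rw [CmF_mul_BmF, Matrix.mul_assoc, BmF_mul_CmFt, ← Matrix.mul_assoc]
  rfl

lemma LF_eq (src tgt : Fin m → Fin (n+1)) (b : Fin m → ℝ) (F : Finset (Fin m)) :
    CFmat src tgt F * BFmat b F * (CFmat src tgt F)ᵀ
      = incM src tgt * Matrix.diagonal (maskIn F b) * (incM src tgt)ᵀ := by
  rw [CF_mul_BF, Matrix.mul_assoc, BF_mul_CFt, ← Matrix.mul_assoc]
  rfl

lemma L_split (src tgt : Fin m → Fin (n+1)) (b : Fin m → ℝ) (F : Finset (Fin m)) :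
    incM src tgt * Matrix.diagonal b * (incM src tgt)ᵀ
      = CmFmat src tgt F * BmFmat b F * (CmFmat src tgt F)ᵀ
        + CFmat src tgt F * BFmat b F * (CFmat src tgt F)ᵀ := by
  rw [Lm_eq, LF_eq]
  have : Matrix.diagonal b
      = Matrix.diagonal (maskOut F b) + Matrix.diagonal (maskIn F b) := by
    have hb : b = maskOut F b + maskIn F b := by
      funext l
      simp only [Pi.add_apply, maskOut, maskIn]
      by_cases h : l ∈ F <;> simp [h]
    calc Matrix.diagonal b = Matrix.diagonal (maskOut F b + maskIn F b) := by rw [← hb]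
      _ = _ := by rw [Matrix.diagonal_add]; rfl
  rw [this, Matrix.mul_add, Matrix.add_mul]

lemma woodbury {k r : Type*} [Fintype k] [Fintype r] [DecidableEq k] [DecidableEq r]
    (Lb P : Matrix k k ℝ) (U : Matrix k r ℝ) (V : Matrix r k ℝ) (BF M Mi : Matrix r r ℝ)
    (e1 : Lb * P = 1) (e2 : M * Mi = 1) (e3 : M = 1 - BF * V * P * U) :
    (Lb - U * BF * V) * (P + P * U * Mi * BF * V * P) = 1 := by
  have h13 : BF * V * P * U = 1 - M := by rw [e3, sub_sub_cancel]
  have t2 : Lb * (P * U * Mi * BF * V * P) = U * (Mi * (BF * V * P)) := by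
    rw [show P * U * Mi * BF * V * P = P * (U * (Mi * (BF * V * P))) by
      simp only [Matrix.mul_assoc], ← Matrix.mul_assoc, e1, Matrix.one_mul]
  have t4 : U * BF * V * (P * U * Mi * BF * V * P)
      = U * ((BF * V * P * U) * (Mi * (BF * V * P))) := by
    simp only [Matrix.mul_assoc]
  have t3 : U * BF * V * P = U * (BF * V * P) := by simp only [Matrix.mul_assoc]
  have t5 : U * ((1 - M) * (Mi * (BF * V * P)))
      = U * (Mi * (BF * V * P)) - U * (BF * V * P) := by
    rw [Matrix.sub_mul, Matrix.one_mul, ← Matrix.mul_assoc M Mi, e2, Matrix.one_mul,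
      Matrix.mul_sub]
  calc (Lb - U * BF * V) * (P + P * U * Mi * BF * V * P)
      = Lb * P + Lb * (P * U * Mi * BF * V * P)
        - (U * BF * V * P + U * BF * V * (P * U * Mi * BF * V * P)) := by
        rw [Matrix.sub_mul, Matrix.mul_add, Matrix.mul_add]
    _ = 1 + U * (Mi * (BF * V * P))
        - (U * (BF * V * P) + (U * (Mi * (BF * V * P)) - U * (BF * V * P))) := by
        rw [e1, t2, t4, t3, h13, t5]
    _ = 1 := by abel

/-- pre-contingency representation of the post-contingency PTDF matrix.
If `I − B_F C_Fᵀ A C_F` is invertible and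
`K^F = B_{−F} C_{−F}ᵀ A C_F (I − B_F C_Fᵀ A C_F)⁻¹`, then the post-contingency PTDF matrix
`D̂^F = B_{−F} C_{−F}ᵀ A_{−F}` satisfies `D̂^F = (B_{−F} C_{−F}ᵀ + K^F B_F C_Fᵀ) A`. -/
theorem ptdf_pre_contingency_representation
    {n m : ℕ} (src tgt : Fin m → Fin (n+1)) (hsl : ∀ l, src l ≠ tgt l)
    (b : Fin m → ℝ) (hb : ∀ l, 0 < b l)
    (F : Finset (Fin m))
    (hconnPre : (netGraph src tgt).Connected)
    (hconnPost : (netGraphOn src tgt {l | l ∉ F}).Connected)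
    (hinv : IsUnit (1 - BFmat b F * (CFmat src tgt F)ᵀ * Amat src tgt b * CFmat src tgt F))
    (KF : Matrix (Fin m) (Fin m) ℝ)
    (hKF : KF = BmFmat b F * (CmFmat src tgt F)ᵀ * Amat src tgt b * CFmat src tgt F *
      (1 - BFmat b F * (CFmat src tgt F)ᵀ * Amat src tgt b * CFmat src tgt F)⁻¹) :
    BmFmat b F * (CmFmat src tgt F)ᵀ * AmFmat src tgt b F =
      (BmFmat b F * (CmFmat src tgt F)ᵀ + KF * BFmat b F * (CFmat src tgt F)ᵀ) *
        Amat src tgt b := by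
  set J := Jmat n with hJ
  set C := incM src tgt with hCdef
  set CF := CFmat src tgt F with hCF
  set CmF := CmFmat src tgt F with hCmF
  set BF := BFmat b F with hBF
  set BmF := BmFmat b F with hBmF
  set P := ((C * Matrix.diagonal b * Cᵀ).submatrix Fin.castSucc Fin.castSucc)⁻¹ with hP
  set Q := ((CmF * BmF * CmFᵀ).submatrix Fin.castSucc Fin.castSucc)⁻¹ with hQdef
  have hA : Amat src tgt b = J * P * Jᵀ := AmatL_eq _
  have hAm : AmFmat src tgt b F = J * Q * Jᵀ := AmatL_eq _
  -- invertibility of the reduced Laplacians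
  have hLu : IsUnit ((C * Matrix.diagonal b * Cᵀ).submatrix Fin.castSucc Fin.castSucc).det :=
    reducedL_isUnit src tgt hsl b (fun l => (hb l).le) (hc_pre src tgt b hb hconnPre)
  have hLmu : IsUnit ((CmF * BmF * CmFᵀ).submatrix Fin.castSucc Fin.castSucc).det := by
    rw [hCmF, hBmF, Lm_eq]
    exact reducedL_isUnit src tgt hsl (maskOut F b)
      (fun l => by by_cases h : l ∈ F <;> simp [maskOut, h, (hb l).le])
      (hc_post src tgt b hb F hconnPost)
  -- the invertible mid matrix, rewritten in terms of J and P
  rw [hA] at hinv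
  have hMdet : IsUnit (1 - BF * CFᵀ * (J * P * Jᵀ) * CF).det :=
    (Matrix.isUnit_iff_isUnit_det _).mp hinv
  -- Woodbury identity
  have hLmbeq : (CmF * BmF * CmFᵀ).submatrix Fin.castSucc Fin.castSucc
      = (C * Matrix.diagonal b * Cᵀ).submatrix Fin.castSucc Fin.castSucc
        - (Jᵀ * CF) * BF * (CFᵀ * J) := by
    have hs : (C * Matrix.diagonal b * Cᵀ).submatrix Fin.castSucc Fin.castSucc
        = (CmF * BmF * CmFᵀ).submatrix Fin.castSucc Fin.castSucc
          + (Jᵀ * CF) * BF * (CFᵀ * J) := by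
      have h1 : (CF * BF * CFᵀ).submatrix Fin.castSucc Fin.castSucc
          = (Jᵀ * CF) * BF * (CFᵀ * J) := by
        rw [← Jmat_conj, hJ]
        simp only [Matrix.mul_assoc]
      rw [hCdef, L_split src tgt b F, ← hCF, ← hCmF, ← hBF, ← hBmF, Matrix.submatrix_add]
      rw [Pi.add_apply, Pi.add_apply, h1]
    rw [hs, add_sub_cancel_right]
  have hQ : Q = P + P * (Jᵀ * CF) * (1 - BF * CFᵀ * (J * P * Jᵀ) * CF)⁻¹
      * BF * (CFᵀ * J) * P := by
    rw [hQdef]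
    apply Matrix.inv_eq_right_inv
    rw [hLmbeq]
    refine woodbury _ _ _ _ _ _ _ (Matrix.mul_nonsing_inv _ hLu)
      (Matrix.mul_nonsing_inv _ hMdet) ?_
    congr 1
    simp only [Matrix.mul_assoc]
  -- final assembly
  rw [hKF, hAm, hA, hQ]
  simp only [Matrix.mul_add, Matrix.add_mul, Matrix.mul_assoc]
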